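/- Let p be a prime, q = p^e a power of p, ℓ an odd prime different from p, and n a positive integer divisible by neither p nor ℓ. Let γ be an integer, τ the least positive integer with γ·q^τ ≡ γ (mod n), and assume ℓ ∣ q^τ − 1 with v_ℓ(q^τ − 1) = 1. Let (a_k)_{k≥0}, a_k ∈ {0,…,ℓ−1}, be the unique sequence such that ℓ^{N+1} ∣ γ + n·Σ_{k=0}^{N} a_k ℓ^k for all N ≥ 0. Then for every f ≥ 1, the q-cyclotomic cosets modulo ℓ^f n whose projection to ℤ/nℤ equals c_{n/q}(γ) are exactly the following f·(ℓ−1) + 1 pairwise distinct cosets: the cosets containing γ + n·(Σ_{k=0}^{m−1} a_k ℓ^k + b·ℓ^m) for each 0 ≤ m ≤ f−1 and each b ∈ {0,…,ℓ−1} with b ≠ a_m, of size ℓ^{f−m−1}·τ respectively, together with the coset containing γ + n·Σ_{k=0}^{f} a_k ℓ^k, of size τ. -/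

import Mathlib

/-- The `q`-cyclotomic coset modulo `m` containing (the class of) the integer `γ`,
as a subset of `ZMod m`. -/
def cycCoset (q m : ℕ) (γ : ℤ) : Set (ZMod m) :=
  {x | ∃ j : ℕ, x = (γ : ZMod m) * (q : ZMod m) ^ j}

/-- The partial sum `Σ_{k=0}^{m-1} a_k ℓ^k` of the digit sequence `a`. -/
def digitSum (ℓ : ℕ) (a : ℕ → ℕ) (m : ℕ) : ℤ :=
  ∑ k ∈ Finset.range m, (a k : ℤ) * (ℓ : ℤ) ^ k

lemma pow_order_one (q M : ℕ) (hM : 0 < M) (h : Nat.Coprime q M) :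
    ∃ s : ℕ, 0 < s ∧ (q : ZMod M) ^ s = 1 := by
  haveI : NeZero M := ⟨hM.ne'⟩
  refine ⟨orderOf (ZMod.unitOfCoprime q h), orderOf_pos _, ?_⟩
  rw [← ZMod.coe_unitOfCoprime q h, ← Units.val_pow_eq_pow_val, pow_orderOf_eq_one,
    Units.val_one]

lemma cycCoset_eq_iff (q M : ℕ) (hM : 0 < M) (hco : Nat.Coprime q M) (δ δ' : ℤ) :
    cycCoset q M δ = cycCoset q M δ' ↔
      ∃ j : ℕ, δ' ≡ δ * (q : ℤ) ^ j [ZMOD (M : ℤ)] := by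
  obtain ⟨s, hs, hs1⟩ := pow_order_one q M hM hco
  have cast_iff : ∀ (x : ℤ) (j : ℕ), x ≡ δ * (q : ℤ) ^ j [ZMOD (M : ℤ)] ↔
      (x : ZMod M) = (δ : ZMod M) * (q : ZMod M) ^ j := by
    intro x j
    rw [← ZMod.intCast_eq_intCast_iff]
    push_cast
    rfl
  constructor
  · intro h
    have hmem : (δ' : ZMod M) ∈ cycCoset q M δ' := ⟨0, by simp⟩
    rw [← h] at hmem
    obtain ⟨j, hj⟩ := hmem
    exact ⟨j, (cast_iff δ' j).2 hj⟩
  · rintro ⟨j, hj⟩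
    have hj' : (δ' : ZMod M) = (δ : ZMod M) * (q : ZMod M) ^ j := (cast_iff δ' j).1 hj
    have hpow : (q : ZMod M) ^ (j + j * (s - 1)) = 1 := by
      have hjs : j + j * (s - 1) = s * j := by
        cases s with
        | zero => omega
        | succ t =>
          rw [Nat.succ_sub_one, Nat.succ_mul, Nat.mul_comm j t]
          exact Nat.add_comm j (t * j)
      rw [hjs, pow_mul, hs1, one_pow]
    ext x
    simp only [cycCoset, Set.mem_setOf_eq]
    constructor
    · rintro ⟨i, rfl⟩
      refine ⟨j * (s - 1) + i, ?_⟩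
      rw [hj', mul_assoc, ← pow_add]
      rw [show j + (j * (s - 1) + i) = (j + j * (s - 1)) + i by ring, pow_add, hpow, one_mul]
    · rintro ⟨i, rfl⟩
      exact ⟨j + i, by rw [hj', mul_assoc, ← pow_add]⟩

lemma image_cycCoset (q M n : ℕ) (h : n ∣ M) (δ : ℤ) :
    (ZMod.castHom h (ZMod n)) '' (cycCoset q M δ) = cycCoset q n δ := by
  ext x
  simp only [Set.mem_image, cycCoset, Set.mem_setOf_eq]
  constructor
  · rintro ⟨y, ⟨j, rfl⟩, rfl⟩
    exact ⟨j, by rw [map_mul, map_pow, map_intCast, map_natCast]⟩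
  · rintro ⟨j, rfl⟩
    exact ⟨(δ : ZMod M) * (q : ZMod M) ^ j, ⟨j, rfl⟩,
      by rw [map_mul, map_pow, map_intCast, map_natCast]⟩

lemma pow_modEq_iff (n q : ℕ) (γ : ℤ) (τ : ℕ)
    (hτ : IsLeast {t : ℕ | 0 < t ∧ γ * (q : ℤ) ^ t ≡ γ [ZMOD (n : ℤ)]} τ) (j : ℕ) :
    γ * (q : ℤ) ^ j ≡ γ [ZMOD (n : ℤ)] ↔ τ ∣ j := by
  obtain ⟨⟨hτ0, hτm⟩, hlb⟩ := hτ
  have key : ∀ c : ℕ, γ * (q : ℤ) ^ (τ * c) ≡ γ [ZMOD (n : ℤ)] := by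
    intro c
    induction c with
    | zero => simp
    | succ c ih =>
      calc γ * (q : ℤ) ^ (τ * (c + 1)) = γ * (q : ℤ) ^ (τ * c) * (q : ℤ) ^ τ := by
            rw [mul_assoc, ← pow_add, Nat.mul_succ]
        _ ≡ γ * (q : ℤ) ^ τ [ZMOD (n : ℤ)] := ih.mul_right _
        _ ≡ γ [ZMOD (n : ℤ)] := hτm
  constructor
  · intro h
    have hj : j = τ * (j / τ) + j % τ := (Nat.div_add_mod j τ).symm
    have h2 : γ * (q : ℤ) ^ (j % τ) ≡ γ [ZMOD (n : ℤ)] := by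
      have : γ * (q : ℤ) ^ j = γ * (q : ℤ) ^ (τ * (j / τ)) * (q : ℤ) ^ (j % τ) := by
        rw [mul_assoc, ← pow_add, ← hj]
      have h3 : γ * (q : ℤ) ^ (τ * (j / τ)) * (q : ℤ) ^ (j % τ) ≡
          γ * (q : ℤ) ^ (j % τ) [ZMOD (n : ℤ)] := (key _).mul_right _
      calc γ * (q : ℤ) ^ (j % τ) ≡ γ * (q : ℤ) ^ (τ * (j / τ)) * (q : ℤ) ^ (j % τ)
            [ZMOD (n : ℤ)] := h3.symm
        _ = γ * (q : ℤ) ^ j := this.symm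
        _ ≡ γ [ZMOD (n : ℤ)] := h
    by_cases hr : j % τ = 0
    · exact Nat.dvd_of_mod_eq_zero hr
    · exfalso
      have := hlb ⟨Nat.pos_of_ne_zero hr, h2⟩
      have := Nat.mod_lt j hτ0
      omega
  · rintro ⟨c, rfl⟩
    exact key c

lemma lte_dvd_iff (ℓ : ℕ) (hℓ : ℓ.Prime) (hℓ2 : ℓ ≠ 2) (x : ℤ)
    (h1 : (ℓ : ℤ) ∣ x - 1) (h2 : ¬ (ℓ : ℤ) ^ 2 ∣ x - 1) (s k : ℕ) :
    ((ℓ : ℤ) ^ (s + 1) ∣ x ^ k - 1 ↔ ℓ ^ s ∣ k) := by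
  have hx : ¬ (ℓ : ℤ) ∣ x := by
    intro h
    have : (ℓ : ℤ) ∣ 1 := by
      have := dvd_sub h h1
      simpa using this
    have := Int.le_of_dvd one_pos this
    have := hℓ.two_le
    omega
  have hodd : Odd ℓ := hℓ.odd_of_ne_two hℓ2
  have lte := Int.emultiplicity_pow_sub_pow hℓ hodd (by simpa using h1) hx k
  have e1 : emultiplicity ((ℓ : ℤ)) (x - 1) = 1 := by
    rw [show (1 : ℕ∞) = ((1 : ℕ) : ℕ∞) by rfl]
    refine emultiplicity_eq_coe.2 ⟨by simpa using h1, by simpa using h2⟩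
  rw [pow_dvd_iff_le_emultiplicity, show x ^ k - 1 = x ^ k - 1 ^ k by ring, lte, e1,
    pow_dvd_iff_le_emultiplicity]
  rw [show ((s + 1 : ℕ) : ℕ∞) = (s : ℕ∞) + 1 by push_cast; ring, add_comm (1 : ℕ∞)]
  exact ENat.add_le_add_iff_right (by simp)

section Core

variable (ℓ n q : ℕ) (γ : ℤ) (τ : ℕ)

lemma modeq_core (hℓ : ℓ.Prime) (hnℓ : ¬ ℓ ∣ n)
    (hτ : IsLeast {t : ℕ | 0 < t ∧ γ * (q : ℤ) ^ t ≡ γ [ZMOD (n : ℤ)]} τ)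
    (f : ℕ) (δ : ℤ) (hδγ : (n : ℤ) ∣ δ - γ) (j : ℕ) :
    (δ * (q : ℤ) ^ j ≡ δ [ZMOD ((ℓ ^ f * n : ℕ) : ℤ)]) ↔
      (τ ∣ j ∧ (ℓ : ℤ) ^ f ∣ δ * ((q : ℤ) ^ j - 1)) := by
  have hco : IsCoprime ((ℓ : ℤ) ^ f) (n : ℤ) := by
    apply IsCoprime.pow_left
    exact Nat.isCoprime_iff_coprime.mpr (hℓ.coprime_iff_not_dvd.mpr hnℓ)
  have hmod : δ * (q : ℤ) ^ j ≡ δ [ZMOD ((ℓ ^ f * n : ℕ) : ℤ)] ↔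
      ((ℓ : ℤ) ^ f * (n : ℤ)) ∣ δ * ((q : ℤ) ^ j - 1) := by
    rw [Int.modEq_iff_dvd, show δ - δ * (q : ℤ) ^ j = -(δ * ((q : ℤ) ^ j - 1)) by ring,
      dvd_neg, show ((ℓ ^ f * n : ℕ) : ℤ) = (ℓ : ℤ) ^ f * (n : ℤ) by push_cast; ring]
  rw [hmod]
  have hn : (n : ℤ) ∣ δ * ((q : ℤ) ^ j - 1) ↔ τ ∣ j := by
    rw [← pow_modEq_iff n q γ τ hτ j]
    have key : (n : ℤ) ∣ (δ * ((q : ℤ) ^ j - 1) - γ * ((q : ℤ) ^ j - 1)) := by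
      have : δ * ((q : ℤ) ^ j - 1) - γ * ((q : ℤ) ^ j - 1) = (δ - γ) * ((q : ℤ) ^ j - 1) := by
        ring
      rw [this]
      exact hδγ.mul_right _
    constructor <;> intro h
    · have h2 : (n : ℤ) ∣ γ * ((q : ℤ) ^ j - 1) := by
        have := dvd_sub h key
        simpa using this
      rw [Int.modEq_iff_dvd, show γ - γ * (q : ℤ) ^ j = -(γ * ((q : ℤ) ^ j - 1)) by ring,
        dvd_neg]
      exact h2
    · have h2 : (n : ℤ) ∣ γ * ((q : ℤ) ^ j - 1) := by
        rw [Int.modEq_iff_dvd, show γ - γ * (q : ℤ) ^ j = -(γ * ((q : ℤ) ^ j - 1)) by ring,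
          dvd_neg] at h
        exact h
      have := dvd_add key h2
      simpa using this
  constructor
  · intro h
    have h1 : (n : ℤ) ∣ δ * ((q : ℤ) ^ j - 1) :=
      dvd_trans (dvd_mul_left ((n : ℤ)) ((ℓ : ℤ) ^ f)) h
    have h2 : ((ℓ : ℤ) ^ f) ∣ δ * ((q : ℤ) ^ j - 1) :=
      dvd_trans (dvd_mul_right ((ℓ : ℤ) ^ f) (n : ℤ)) h
    exact ⟨hn.mp h1, h2⟩
  · rintro ⟨h1, h2⟩
    exact hco.mul_dvd h2 (hn.mpr h1)

lemma mem_iff_case_m (hℓ : ℓ.Prime) (hℓ2 : ℓ ≠ 2) (hnℓ : ¬ ℓ ∣ n)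
    (hτ : IsLeast {t : ℕ | 0 < t ∧ γ * (q : ℤ) ^ t ≡ γ [ZMOD (n : ℤ)]} τ)
    (hdvd : (ℓ : ℤ) ∣ (q : ℤ) ^ τ - 1)
    (h2 : ¬ (ℓ : ℤ) ^ 2 ∣ (q : ℤ) ^ τ - 1)
    (f m : ℕ) (hmf : m < f) (c : ℤ) (hcℓ : ¬ (ℓ : ℤ) ∣ c)
    (δ : ℤ) (hδ : δ = (ℓ : ℤ) ^ m * c) (hδγ : (n : ℤ) ∣ δ - γ) (j : ℕ) :
    (0 < j ∧ δ * (q : ℤ) ^ j ≡ δ [ZMOD ((ℓ ^ f * n : ℕ) : ℤ)]) ↔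
      (0 < j ∧ ℓ ^ (f - m - 1) * τ ∣ j) := by
  have hτ0 : 0 < τ := hτ.1.1
  have hℓ0 : (0:ℤ) < (ℓ:ℤ) := by exact_mod_cast hℓ.pos
  have hfm : f - m - 1 + 1 = f - m := by omega
  have hmfm : m + (f - m) = f := by omega
  have hlift : ∀ k : ℕ, ((ℓ : ℤ) ^ (f - m) ∣ (q : ℤ) ^ (τ * k) - 1 ↔ ℓ ^ (f - m - 1) ∣ k) := by
    intro k
    rw [← hfm, pow_mul]
    exact lte_dvd_iff ℓ hℓ hℓ2 ((q : ℤ) ^ τ) hdvd h2 (f - m - 1) k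
  constructor
  · rintro ⟨hj0, hmem⟩
    obtain ⟨hτj, hf⟩ := (modeq_core ℓ n q γ τ hℓ hnℓ hτ f δ hδγ j).mp hmem
    obtain ⟨k, rfl⟩ := hτj
    refine ⟨hj0, ?_⟩
    have hf' : (ℓ : ℤ) ^ (f - m) ∣ c * ((q : ℤ) ^ (τ * k) - 1) := by
      have hre : δ * ((q : ℤ) ^ (τ * k) - 1) = (ℓ : ℤ) ^ m * (c * ((q : ℤ) ^ (τ * k) - 1)) := by
        rw [hδ]; ring
      rw [hre, ← hmfm, pow_add,
        mul_dvd_mul_iff_left (pow_ne_zero m (by positivity : (ℓ : ℤ) ≠ 0))] at hf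
      exact hf
    have hcop : IsCoprime ((ℓ : ℤ) ^ (f - m)) c :=
      (((Nat.prime_iff_prime_int.mp hℓ).coprime_iff_not_dvd).mpr hcℓ).pow_left
    have hq1 := hcop.dvd_of_dvd_mul_left hf'
    obtain ⟨u, rfl⟩ := (hlift k).mp hq1
    exact ⟨u, by ring⟩
  · rintro ⟨hj0, hdj⟩
    refine ⟨hj0, (modeq_core ℓ n q γ τ hℓ hnℓ hτ f δ hδγ j).mpr
      ⟨dvd_trans (dvd_mul_left τ _) hdj, ?_⟩⟩
    obtain ⟨u, rfl⟩ := hdj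
    have hj' : ℓ ^ (f - m - 1) * τ * u = τ * (ℓ ^ (f - m - 1) * u) := by ring
    rw [hj']
    have hq2 : (ℓ : ℤ) ^ (f - m) ∣ (q : ℤ) ^ (τ * (ℓ ^ (f - m - 1) * u)) - 1 :=
      (hlift (ℓ ^ (f - m - 1) * u)).mpr ⟨u, rfl⟩
    have : (ℓ : ℤ) ^ m * (ℓ : ℤ) ^ (f - m) ∣
        (ℓ : ℤ) ^ m * (c * ((q : ℤ) ^ (τ * (ℓ ^ (f - m - 1) * u)) - 1)) :=
      mul_dvd_mul_left _ (hq2.mul_left c)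
    rw [← pow_add, hmfm] at this
    calc (ℓ : ℤ) ^ f ∣ (ℓ : ℤ) ^ m * (c * ((q : ℤ) ^ (τ * (ℓ ^ (f - m - 1) * u)) - 1)) := this
      _ = δ * ((q : ℤ) ^ (τ * (ℓ ^ (f - m - 1) * u)) - 1) := by rw [hδ]; ring

lemma mem_iff_case_f (hℓ : ℓ.Prime) (hnℓ : ¬ ℓ ∣ n)
    (hτ : IsLeast {t : ℕ | 0 < t ∧ γ * (q : ℤ) ^ t ≡ γ [ZMOD (n : ℤ)]} τ)
    (f : ℕ) (δ : ℤ) (hδf : (ℓ : ℤ) ^ f ∣ δ) (hδγ : (n : ℤ) ∣ δ - γ) (j : ℕ) :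
    (0 < j ∧ δ * (q : ℤ) ^ j ≡ δ [ZMOD ((ℓ ^ f * n : ℕ) : ℤ)]) ↔ (0 < j ∧ τ ∣ j) := by
  rw [modeq_core ℓ n q γ τ hℓ hnℓ hτ f δ hδγ j]
  constructor
  · rintro ⟨h0, h1, _⟩
    exact ⟨h0, h1⟩
  · rintro ⟨h0, h1⟩
    exact ⟨h0, h1, hδf.mul_right _⟩

end Core

lemma reach_lemma (ℓ n q : ℕ) (γ : ℤ) (τ : ℕ)
    (hℓ : ℓ.Prime) (hℓ2 : ℓ ≠ 2) (hnℓ : ¬ ℓ ∣ n) (hqℓ : ¬ (ℓ : ℤ) ∣ (q : ℤ))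
    (hτ : IsLeast {t : ℕ | 0 < t ∧ γ * (q : ℤ) ^ t ≡ γ [ZMOD (n : ℤ)]} τ)
    (hdvd : (ℓ : ℤ) ∣ (q : ℤ) ^ τ - 1) (h2 : ¬ (ℓ : ℤ) ^ 2 ∣ (q : ℤ) ^ τ - 1)
    (f m : ℕ) (hmf : m < f)
    (δ₁ δ₂ : ℤ) (hδ₁γ : (n : ℤ) ∣ δ₁ - γ)
    (c : ℤ) (hδ₁ : δ₁ = (ℓ : ℤ) ^ m * c) (hcℓ : ¬ (ℓ : ℤ) ∣ c)
    (hdiff_n : (n : ℤ) ∣ δ₂ - δ₁) (hdiff_ℓ : (ℓ : ℤ) ^ (m + 1) ∣ δ₂ - δ₁) :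
    ∃ j : ℕ, δ₂ ≡ δ₁ * (q : ℤ) ^ (τ * j) [ZMOD ((ℓ ^ f * n : ℕ) : ℤ)] := by
  classical
  set N : ℕ := ℓ ^ (f - m - 1) with hN
  have hN0 : 0 < N := pow_pos hℓ.pos _
  have hfm : f - m - 1 + 1 = f - m := by omega
  have hmfm : m + 1 + (f - m - 1) = f := by omega
  have hmfm2 : m + (f - m) = f := by omega
  have hℓ0 : (ℓ : ℤ) ≠ 0 := by exact_mod_cast hℓ.pos.ne'
  set g₁ : ℕ → ZMod (ℓ ^ f) := fun j => ((δ₁ * (q : ℤ) ^ (τ * j) : ℤ) : ZMod (ℓ ^ f)) with hg₁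
  set g₂ : ℕ → ZMod (ℓ ^ f) :=
    fun t => ((δ₁ + (ℓ : ℤ) ^ (m + 1) * t : ℤ) : ZMod (ℓ ^ f)) with hg₂
  have cast_iff : ∀ x y : ℤ, ((x : ZMod (ℓ ^ f)) = (y : ZMod (ℓ ^ f))) ↔
      ((ℓ : ℤ) ^ f ∣ y - x) := by
    intro x y
    rw [ZMod.intCast_eq_intCast_iff, Int.modEq_iff_dvd,
      show ((ℓ ^ f : ℕ) : ℤ) = (ℓ : ℤ) ^ f by push_cast; ring]
  have hpowdvd : ∀ j : ℕ, (ℓ : ℤ) ∣ (q : ℤ) ^ (τ * j) - 1 := by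
    intro j
    have h1 : ((q : ℤ) ^ τ - 1) ∣ ((q : ℤ) ^ τ) ^ j - 1 ^ j := sub_dvd_pow_sub_pow _ _ _
    rw [one_pow, ← pow_mul] at h1
    exact hdvd.trans h1
  have K1 : ∀ j : ℕ, ∃ s : ℤ, δ₁ * (q : ℤ) ^ (τ * j) - δ₁ = (ℓ : ℤ) ^ (m + 1) * s := by
    intro j
    have hre : δ₁ * (q : ℤ) ^ (τ * j) - δ₁ = (ℓ : ℤ) ^ m * (c * ((q : ℤ) ^ (τ * j) - 1)) := by
      rw [hδ₁]; ring
    have : (ℓ : ℤ) ^ (m + 1) ∣ δ₁ * (q : ℤ) ^ (τ * j) - δ₁ := by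
      rw [hre, pow_succ]
      exact mul_dvd_mul (dvd_refl _) ((hpowdvd j).mul_left c)
    exact this
  have K2 : Set.InjOn g₁ ↑(Finset.range N) := by
    have aux : ∀ j₁ j₂ : ℕ, j₁ ≤ j₂ → j₂ < N → g₁ j₁ = g₁ j₂ → j₁ = j₂ := by
      intro j₁ j₂ hle hlt heq
      obtain ⟨d, rfl⟩ : ∃ d, j₂ = j₁ + d := ⟨j₂ - j₁, by omega⟩
      have hd : (ℓ : ℤ) ^ f ∣ δ₁ * (q : ℤ) ^ (τ * (j₁ + d)) - δ₁ * (q : ℤ) ^ (τ * j₁) :=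
        (cast_iff _ _).mp heq
      have hre : δ₁ * (q : ℤ) ^ (τ * (j₁ + d)) - δ₁ * (q : ℤ) ^ (τ * j₁) =
          (ℓ : ℤ) ^ m * ((c * (q : ℤ) ^ (τ * j₁)) * ((q : ℤ) ^ (τ * d) - 1)) := by
        rw [hδ₁, Nat.mul_add, pow_add]; ring
      rw [hre, ← hmfm2, pow_add, mul_dvd_mul_iff_left (pow_ne_zero m hℓ0)] at hd
      have hcop : IsCoprime ((ℓ : ℤ) ^ (f - m)) (c * (q : ℤ) ^ (τ * j₁)) := by
        apply IsCoprime.pow_left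
        exact (((Nat.prime_iff_prime_int.mp hℓ).coprime_iff_not_dvd).mpr hcℓ).mul_right
          ((((Nat.prime_iff_prime_int.mp hℓ).coprime_iff_not_dvd).mpr hqℓ).pow_right)
      have hd' := hcop.dvd_of_dvd_mul_left hd
      rw [← hfm, pow_mul] at hd'
      have hdd : ℓ ^ (f - m - 1) ∣ d :=
        (lte_dvd_iff ℓ hℓ hℓ2 ((q : ℤ) ^ τ) hdvd h2 (f - m - 1) d).mp hd'
      have : d = 0 := Nat.eq_zero_of_dvd_of_lt hdd (by rw [← hN]; omega)
      omega
    intro j₁ h₁ j₂ h₂ heq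
    simp only [Finset.coe_range, Set.mem_Iio] at h₁ h₂
    rcases le_total j₁ j₂ with h | h
    · exact aux j₁ j₂ h h₂ heq
    · exact (aux j₂ j₁ h h₁ heq.symm).symm
  have g2_eq : ∀ (x : ℤ) (s : ℤ), x - δ₁ = (ℓ : ℤ) ^ (m + 1) * s →
      (x : ZMod (ℓ ^ f)) = g₂ ((s % N).toNat) ∧ ((s % N).toNat) < N := by
    intro x s hs
    have hNz : (0 : ℤ) < (N : ℤ) := by exact_mod_cast hN0
    have hnn : 0 ≤ s % N := Int.emod_nonneg s (by exact_mod_cast hN0.ne')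
    have hlt : s % N < N := Int.emod_lt_of_pos s hNz
    have ht : (((s % N).toNat : ℤ)) = s % N := Int.toNat_of_nonneg hnn
    constructor
    · rw [hg₂]
      apply (cast_iff _ _).mpr
      have hre : (δ₁ + (ℓ : ℤ) ^ (m + 1) * (((s % N).toNat : ℤ))) - x =
          (ℓ : ℤ) ^ (m + 1) * (-(s - s % N)) := by
        rw [ht]; linear_combination -hs
      rw [hre, ← hmfm, pow_add]
      apply mul_dvd_mul_left
      apply dvd_neg.mpr
      have hdd : (N : ℤ) ∣ s - s % N := (Int.mod_modEq s N).dvd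
      have hcast : ((N : ℕ) : ℤ) = (ℓ : ℤ) ^ (f - m - 1) := by rw [hN]; push_cast; ring
      rw [← hcast]
      exact hdd
    · omega
  have hAsub : ∀ j ∈ Finset.range N, g₁ j ∈ (Finset.range N).image g₂ := by
    intro j hj
    obtain ⟨s, hs⟩ := K1 j
    obtain ⟨heq, hlt⟩ := g2_eq _ s hs
    exact Finset.mem_image.mpr ⟨_, Finset.mem_range.mpr hlt, heq.symm⟩
  have hcardA : ((Finset.range N).image g₁).card = N := by
    rw [Finset.card_image_of_injOn K2, Finset.card_range]
  have hBA : (Finset.range N).image g₂ = (Finset.range N).image g₁ := by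
    apply (Finset.eq_of_subset_of_card_le ?_ ?_).symm
    · intro x hx
      obtain ⟨j, hj, rfl⟩ := Finset.mem_image.mp hx
      exact hAsub j hj
    · rw [hcardA]
      exact (Finset.card_image_le).trans (by rw [Finset.card_range])
  -- δ₂ lies in the image of g₂, hence of g₁
  obtain ⟨s₂, hs₂⟩ := hdiff_ℓ
  obtain ⟨heq₂, hlt₂⟩ := g2_eq δ₂ s₂ (by linear_combination hs₂)
  have hmem : (δ₂ : ZMod (ℓ ^ f)) ∈ (Finset.range N).image g₁ := by
    rw [← hBA]
    exact Finset.mem_image.mpr ⟨_, Finset.mem_range.mpr hlt₂, heq₂.symm⟩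
  obtain ⟨j, _, hj⟩ := Finset.mem_image.mp hmem
  refine ⟨j, ?_⟩
  have hjf : δ₂ ≡ δ₁ * (q : ℤ) ^ (τ * j) [ZMOD ((ℓ ^ f : ℕ) : ℤ)] := by
    rw [← ZMod.intCast_eq_intCast_iff]
    exact hj.symm
  have hmodn : δ₂ ≡ δ₁ * (q : ℤ) ^ (τ * j) [ZMOD (n : ℤ)] := by
    rw [Int.modEq_iff_dvd]
    have h1 : (n : ℤ) ∣ γ * ((q : ℤ) ^ (τ * j) - 1) := by
      have hg := (pow_modEq_iff n q γ τ hτ (τ * j)).mpr ⟨j, rfl⟩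
      rw [Int.modEq_iff_dvd] at hg
      have : γ - γ * (q : ℤ) ^ (τ * j) = -(γ * ((q : ℤ) ^ (τ * j) - 1)) := by ring
      rw [this, dvd_neg] at hg
      exact hg
    have hre : δ₁ * (q : ℤ) ^ (τ * j) - δ₂ =
        γ * ((q : ℤ) ^ (τ * j) - 1) + (δ₁ - γ) * ((q : ℤ) ^ (τ * j) - 1) + -(δ₂ - δ₁) := by
      ring
    rw [hre]
    exact dvd_add (dvd_add h1 (hδ₁γ.mul_right _)) (dvd_neg.mpr hdiff_n)
  have hcop : ((ℓ ^ f : ℕ) : ℤ).natAbs.Coprime ((n : ℕ) : ℤ).natAbs := by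
    simp only [Int.natAbs_natCast]
    exact Nat.Coprime.pow_left f (hℓ.coprime_iff_not_dvd.mpr hnℓ)
  have hfin := (Int.modEq_and_modEq_iff_modEq_mul hcop).mp ⟨hjf, hmodn⟩
  have hM : ((ℓ ^ f * n : ℕ) : ℤ) = ((ℓ ^ f : ℕ) : ℤ) * ((n : ℕ) : ℤ) := by push_cast; ring
  rw [hM]
  exact hfin

lemma digitSum_succ (ℓ : ℕ) (a : ℕ → ℕ) (m : ℕ) :
    digitSum ℓ a (m + 1) = digitSum ℓ a m + (a m : ℤ) * (ℓ : ℤ) ^ m :=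
  Finset.sum_range_succ _ m

lemma digitSum_sub_dvd (ℓ : ℕ) (a : ℕ → ℕ) (m m' : ℕ) (h : m ≤ m') :
    (ℓ : ℤ) ^ m ∣ digitSum ℓ a m' - digitSum ℓ a m := by
  induction m' with
  | zero =>
    have : m = 0 := by omega
    subst this; simp
  | succ k ih =>
    rcases Nat.lt_or_ge m (k + 1) with hlt | hge
    · have hk : m ≤ k := by omega
      have h1 := ih hk
      have : digitSum ℓ a (k + 1) - digitSum ℓ a m =
          (digitSum ℓ a k - digitSum ℓ a m) + (a k : ℤ) * (ℓ : ℤ) ^ k := by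
        rw [digitSum_succ]; ring
      rw [this]
      exact dvd_add h1 (Dvd.dvd.mul_left (pow_dvd_pow _ hk) _)
    · have : m = k + 1 := by omega
      subst this; simp

lemma int_lt_prime_eq (ℓ b c : ℕ) (hb : b < ℓ) (hc : c < ℓ)
    (h : (ℓ : ℤ) ∣ (b : ℤ) - (c : ℤ)) : b = c := by
  have hmod : c ≡ b [MOD ℓ] := (Nat.modEq_iff_dvd).mpr h
  have h1 : c % ℓ = b % ℓ := hmod
  rw [Nat.mod_eq_of_lt hb, Nat.mod_eq_of_lt hc] at h1
  omega

lemma struct_lemma (ℓ n : ℕ) (hℓ : ℓ.Prime) (hnℓ : ¬ ℓ ∣ n)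
    (γ : ℤ) (a : ℕ → ℕ) (ha : ∀ k, a k < ℓ)
    (hdig : ∀ N : ℕ, (ℓ : ℤ) ^ (N + 1) ∣ γ + n * digitSum ℓ a (N + 1))
    (m b : ℕ) (hb : b < ℓ) (hbne : b ≠ a m) :
    ∃ c : ℤ, γ + n * (digitSum ℓ a m + (b : ℤ) * (ℓ : ℤ) ^ m) = (ℓ : ℤ) ^ m * c ∧
      ¬ (ℓ : ℤ) ∣ c := by
  obtain ⟨w, hw⟩ := hdig m
  refine ⟨(ℓ : ℤ) * w + n * ((b : ℤ) - (a m : ℤ)), ?_, ?_⟩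
  · have : γ + n * (digitSum ℓ a m + (b : ℤ) * (ℓ : ℤ) ^ m) =
        (γ + n * digitSum ℓ a (m + 1)) + n * ((b : ℤ) - (a m : ℤ)) * (ℓ : ℤ) ^ m := by
      rw [digitSum_succ]; ring
    rw [this, hw, pow_succ]
    ring
  · intro hdvdc
    have h1 : (ℓ : ℤ) ∣ (n : ℤ) * ((b : ℤ) - (a m : ℤ)) := by
      have := dvd_sub hdvdc (Dvd.intro w rfl)
      simpa using this
    rcases (Nat.prime_iff_prime_int.mp hℓ).dvd_mul.mp h1 with h | h
    · exact hnℓ (by exact_mod_cast h)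
    · exact hbne (int_lt_prime_eq ℓ b (a m) hb (ha m) h)

theorem stmt_18 (p e q ℓ n : ℕ) (hp : p.Prime) (he : 0 < e) (hq : q = p ^ e)
    (hℓ : ℓ.Prime) (hℓ2 : ℓ ≠ 2) (hℓp : ℓ ≠ p)
    (hn : 0 < n) (hnp : ¬ p ∣ n) (hnℓ : ¬ ℓ ∣ n)
    (γ : ℤ) (τ : ℕ)
    (hτ : IsLeast {t : ℕ | 0 < t ∧ γ * (q : ℤ) ^ t ≡ γ [ZMOD (n : ℤ)]} τ)
    (hdvd : (ℓ : ℤ) ∣ (q : ℤ) ^ τ - 1)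
    (hv : padicValInt ℓ ((q : ℤ) ^ τ - 1) = 1)
    (a : ℕ → ℕ) (ha : ∀ k, a k < ℓ)
    (hdig : ∀ N : ℕ, (ℓ : ℤ) ^ (N + 1) ∣ γ + n * digitSum ℓ a (N + 1)) :
    ∀ f : ℕ, 1 ≤ f →
      -- (1) the cosets modulo ℓ^f n projecting onto c_{n/q}(γ) are exactly the listed ones
      (∀ δ : ℤ,
        ((ZMod.castHom (dvd_mul_left n (ℓ ^ f)) (ZMod n)) '' (cycCoset q (ℓ ^ f * n) δ) =
            cycCoset q n γ) ↔
          ((∃ m < f, ∃ b < ℓ, b ≠ a m ∧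
              cycCoset q (ℓ ^ f * n) δ =
                cycCoset q (ℓ ^ f * n) (γ + n * (digitSum ℓ a m + (b : ℤ) * (ℓ : ℤ) ^ m))) ∨
            cycCoset q (ℓ ^ f * n) δ =
              cycCoset q (ℓ ^ f * n) (γ + n * digitSum ℓ a (f + 1)))) ∧
      -- (2) they are pairwise distinct
      (∀ m₁, m₁ < f → ∀ b₁, b₁ < ℓ → b₁ ≠ a m₁ → ∀ m₂, m₂ < f → ∀ b₂, b₂ < ℓ → b₂ ≠ a m₂ →
        (m₁, b₁) ≠ (m₂, b₂) →
        cycCoset q (ℓ ^ f * n) (γ + n * (digitSum ℓ a m₁ + (b₁ : ℤ) * (ℓ : ℤ) ^ m₁)) ≠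
          cycCoset q (ℓ ^ f * n) (γ + n * (digitSum ℓ a m₂ + (b₂ : ℤ) * (ℓ : ℤ) ^ m₂))) ∧
      (∀ m, m < f → ∀ b, b < ℓ → b ≠ a m →
        cycCoset q (ℓ ^ f * n) (γ + n * (digitSum ℓ a m + (b : ℤ) * (ℓ : ℤ) ^ m)) ≠
          cycCoset q (ℓ ^ f * n) (γ + n * digitSum ℓ a (f + 1))) ∧
      -- (3) their sizes
      (∀ m, m < f → ∀ b, b < ℓ → b ≠ a m →
        IsLeast {j : ℕ | 0 < j ∧
            (γ + n * (digitSum ℓ a m + (b : ℤ) * (ℓ : ℤ) ^ m)) * (q : ℤ) ^ j ≡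
              γ + n * (digitSum ℓ a m + (b : ℤ) * (ℓ : ℤ) ^ m) [ZMOD ((ℓ ^ f * n : ℕ) : ℤ)]}
          (ℓ ^ (f - m - 1) * τ)) ∧
      IsLeast {j : ℕ | 0 < j ∧
          (γ + n * digitSum ℓ a (f + 1)) * (q : ℤ) ^ j ≡
            γ + n * digitSum ℓ a (f + 1) [ZMOD ((ℓ ^ f * n : ℕ) : ℤ)]} τ := by
  intro f hf
  haveI : Fact ℓ.Prime := ⟨hℓ⟩
  have hτ0 : 0 < τ := hτ.1.1
  have hℓ0int : (ℓ : ℤ) ≠ 0 := by exact_mod_cast hℓ.pos.ne'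
  have hℓprimeint : Prime (ℓ : ℤ) := Nat.prime_iff_prime_int.mp hℓ
  have hq2 : 2 ≤ q := by
    rw [hq]
    calc 2 ≤ p := hp.two_le
      _ ≤ p ^ e := Nat.le_self_pow he.ne' p
  have hqτ0 : (q : ℤ) ^ τ - 1 ≠ 0 := by
    have h1 : (1 : ℤ) < (q : ℤ) := by exact_mod_cast hq2
    have := one_lt_pow₀ h1 hτ0.ne'
    omega
  have h2 : ¬ (ℓ : ℤ) ^ 2 ∣ (q : ℤ) ^ τ - 1 := by
    intro hdd
    rcases (padicValInt_dvd_iff 2 ((q : ℤ) ^ τ - 1)).mp hdd with h0 | hle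
    · exact hqτ0 h0
    · rw [hv] at hle; omega
  have hℓq : ¬ ℓ ∣ q := by
    intro hdd
    rw [hq] at hdd
    exact hℓp ((Nat.prime_dvd_prime_iff_eq hℓ hp).mp (hℓ.dvd_of_dvd_pow hdd))
  have hqℓint : ¬ (ℓ : ℤ) ∣ (q : ℤ) := by exact_mod_cast hℓq
  have hcoqn : Nat.Coprime q n := by
    rw [hq]
    exact Nat.Coprime.pow_left e (hp.coprime_iff_not_dvd.mpr hnp)
  have hcoqℓf : Nat.Coprime q (ℓ ^ f) := by
    rw [hq]
    exact Nat.Coprime.pow _ _ ((Nat.coprime_primes hp hℓ).mpr (Ne.symm hℓp))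
  have hcoqM : Nat.Coprime q (ℓ ^ f * n) := Nat.Coprime.mul_right hcoqℓf hcoqn
  have hM0 : 0 < ℓ ^ f * n := Nat.mul_pos (pow_pos hℓ.pos f) hn
  have eqiff : ∀ δ δ' : ℤ, cycCoset q (ℓ ^ f * n) δ = cycCoset q (ℓ ^ f * n) δ' ↔
      ∃ j : ℕ, δ' ≡ δ * (q : ℤ) ^ j [ZMOD ((ℓ ^ f * n : ℕ) : ℤ)] :=
    fun δ δ' => cycCoset_eq_iff q (ℓ ^ f * n) hM0 hcoqM δ δ'
  have eqiffn : ∀ δ δ' : ℤ, cycCoset q n δ = cycCoset q n δ' ↔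
      ∃ j : ℕ, δ' ≡ δ * (q : ℤ) ^ j [ZMOD ((n : ℕ) : ℤ)] :=
    fun δ δ' => cycCoset_eq_iff q n hn hcoqn δ δ'
  have fact3 : (ℓ : ℤ) ^ f ∣ γ + n * digitSum ℓ a (f + 1) :=
    (pow_dvd_pow (ℓ : ℤ) (by omega : f ≤ f + 1)).trans (hdig f)
  have hδγ : ∀ x : ℤ, (n : ℤ) ∣ (γ + n * x) - γ := fun x => ⟨x, by ring⟩
  have hℓfdvdM : ((ℓ : ℤ)) ^ f ∣ ((ℓ ^ f * n : ℕ) : ℤ) := ⟨(n : ℤ), by push_cast; ring⟩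
  have hndvdM : ((n : ℕ) : ℤ) ∣ ((ℓ ^ f * n : ℕ) : ℤ) := ⟨((ℓ : ℤ)) ^ f, by push_cast; ring⟩
  have hdropℓ : ∀ (s : ℕ), s ≤ f → ∀ x y : ℤ,
      x ≡ y [ZMOD ((ℓ ^ f * n : ℕ) : ℤ)] → (ℓ : ℤ) ^ s ∣ y - x := by
    intro s hs x y hxy
    exact dvd_trans (dvd_trans (pow_dvd_pow (ℓ : ℤ) hs) hℓfdvdM) (Int.modEq_iff_dvd.mp hxy)
  have hdropn : ∀ x y : ℤ, x ≡ y [ZMOD ((ℓ ^ f * n : ℕ) : ℤ)] → x ≡ y [ZMOD ((n : ℕ) : ℤ)] :=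
    fun x y h => h.of_dvd hndvdM
  have hpowdvd : ∀ j : ℕ, τ ∣ j → (ℓ : ℤ) ∣ (q : ℤ) ^ j - 1 := by
    rintro j ⟨k, rfl⟩
    have h1 : ((q : ℤ) ^ τ - 1) ∣ ((q : ℤ) ^ τ) ^ k - 1 ^ k := sub_dvd_pow_sub_pow _ _ _
    rw [one_pow, ← pow_mul] at h1
    exact hdvd.trans h1
  have hτextract : ∀ (δ₁ δ₂ : ℤ), (n : ℤ) ∣ δ₁ - γ → (n : ℤ) ∣ δ₂ - γ → ∀ j : ℕ,
      δ₂ ≡ δ₁ * (q : ℤ) ^ j [ZMOD ((ℓ ^ f * n : ℕ) : ℤ)] → (ℓ : ℤ) ∣ (q : ℤ) ^ j - 1 := by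
    intro δ₁ δ₂ h₁ h₂ j hj
    apply hpowdvd j
    rw [← pow_modEq_iff n q γ τ hτ j]
    have hn' := Int.modEq_iff_dvd.mp (hdropn _ _ hj)
    rw [Int.modEq_iff_dvd]
    have heq : γ - γ * (q : ℤ) ^ j = (δ₁ * (q : ℤ) ^ j - δ₂) * (-1) +
        (δ₁ - γ) * (q : ℤ) ^ j + (δ₂ - γ) * (-1) := by ring
    rw [heq]
    exact dvd_add (dvd_add (hn'.mul_right _) (h₁.mul_right _)) (h₂.mul_right _)
  refine ⟨?_, ?_, ?_, ?_, ?_⟩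
  · -- (1) classification
    intro δ
    rw [image_cycCoset q (ℓ ^ f * n) n (dvd_mul_left n (ℓ ^ f)) δ]
    constructor
    · intro h
      obtain ⟨i, hi⟩ := (eqiffn δ γ).mp h
      have hM : cycCoset q (ℓ ^ f * n) δ = cycCoset q (ℓ ^ f * n) (δ * (q : ℤ) ^ i) :=
        (eqiff δ (δ * (q : ℤ) ^ i)).mpr ⟨i, Int.ModEq.refl _⟩
      obtain ⟨y, hy⟩ : ∃ y : ℤ, δ * (q : ℤ) ^ i = γ + n * y := by
        obtain ⟨y, hy⟩ := Int.modEq_iff_dvd.mp hi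
        exact ⟨y, by linarith⟩
      by_cases hcase : (ℓ : ℤ) ^ f ∣ y - digitSum ℓ a f
      · right
        rw [hM]
        apply ((eqiff _ _).mpr ⟨0, ?_⟩).symm
        rw [pow_zero, mul_one, Int.modEq_iff_dvd, hy]
        have hsf : (ℓ : ℤ) ^ f ∣ digitSum ℓ a (f + 1) - digitSum ℓ a f :=
          digitSum_sub_dvd ℓ a f (f + 1) (by omega)
        have h1 : (ℓ : ℤ) ^ f ∣ y - digitSum ℓ a (f + 1) := by
          have hre : y - digitSum ℓ a (f + 1) =
              (y - digitSum ℓ a f) - (digitSum ℓ a (f + 1) - digitSum ℓ a f) := by ring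
          rw [hre]
          exact dvd_sub hcase hsf
        obtain ⟨w, hw⟩ := h1
        refine ⟨-w, ?_⟩
        push_cast
        linear_combination (-(n : ℤ)) * hw
      · left
        have hwit : ¬ (ℓ : ℤ) ^ ((f - 1) + 1) ∣ y - digitSum ℓ a f := by
          rwa [show f - 1 + 1 = f by omega]
        have hfind : ∃ k, ¬ (ℓ : ℤ) ^ (k + 1) ∣ y - digitSum ℓ a f := ⟨f - 1, hwit⟩
        classical
        have hm : ¬ (ℓ : ℤ) ^ (Nat.find hfind + 1) ∣ y - digitSum ℓ a f := Nat.find_spec hfind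
        set m := Nat.find hfind with hmdef
        have hmle : m ≤ f - 1 := Nat.find_min' hfind hwit
        have hmf : m < f := by omega
        have hℓm : (ℓ : ℤ) ^ m ∣ y - digitSum ℓ a f := by
          rcases Nat.eq_zero_or_pos m with h0 | h0
          · rw [h0]; simp
          · have hnm := Nat.find_min hfind (show m - 1 < m by omega)
            have h' := not_not.mp hnm
            rwa [show m - 1 + 1 = m by omega] at h'
        have hzdvd : (ℓ : ℤ) ^ m ∣ y - digitSum ℓ a m := by
          have h1 := digitSum_sub_dvd ℓ a m f (by omega)
          have hre : y - digitSum ℓ a m =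
              (y - digitSum ℓ a f) + (digitSum ℓ a f - digitSum ℓ a m) := by ring
          rw [hre]
          exact dvd_add hℓm h1
        obtain ⟨z, hz⟩ := hzdvd
        have hℓpos : (0 : ℤ) < (ℓ : ℤ) := by exact_mod_cast hℓ.pos
        have hznn : 0 ≤ z % ℓ := Int.emod_nonneg z hℓ0int
        have hzlt : z % ℓ < ℓ := Int.emod_lt_of_pos z hℓpos
        set b : ℕ := (z % ℓ).toNat with hbdef
        have hbz : (b : ℤ) = z % ℓ := Int.toNat_of_nonneg hznn
        have hb : b < ℓ := by
          have : (b : ℤ) < (ℓ : ℤ) := by rw [hbz]; exact hzlt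
          exact_mod_cast this
        have hbdvd : (ℓ : ℤ) ∣ z - b := by
          rw [hbz]
          exact (Int.mod_modEq z ℓ).dvd
        have hbne : b ≠ a m := by
          intro hbb
          apply hm
          have h1 : (ℓ : ℤ) ∣ z - a m := by rw [← hbb]; exact hbdvd
          have h2 : (ℓ : ℤ) ^ (m + 1) ∣ y - digitSum ℓ a (m + 1) := by
            have hre : y - digitSum ℓ a (m + 1) = (ℓ : ℤ) ^ m * (z - a m) := by
              rw [digitSum_succ]
              linear_combination hz
            rw [hre, pow_succ]
            exact mul_dvd_mul (dvd_refl _) h1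
          have h3 : (ℓ : ℤ) ^ (m + 1) ∣ digitSum ℓ a f - digitSum ℓ a (m + 1) :=
            digitSum_sub_dvd ℓ a (m + 1) f (by omega)
          have hre : y - digitSum ℓ a f =
              (y - digitSum ℓ a (m + 1)) - (digitSum ℓ a f - digitSum ℓ a (m + 1)) := by ring
          rw [hre]
          exact dvd_sub h2 h3
        refine ⟨m, hmf, b, hb, hbne, ?_⟩
        obtain ⟨c, hc, hcl⟩ := struct_lemma ℓ n hℓ hnℓ γ a ha hdig m b hb hbne
        have hdiffn : (n : ℤ) ∣ (δ * (q : ℤ) ^ i) -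
            (γ + n * (digitSum ℓ a m + (b : ℤ) * (ℓ : ℤ) ^ m)) := by
          rw [hy]
          exact ⟨y - (digitSum ℓ a m + (b : ℤ) * (ℓ : ℤ) ^ m), by ring⟩
        have hdiffl : (ℓ : ℤ) ^ (m + 1) ∣ (δ * (q : ℤ) ^ i) -
            (γ + n * (digitSum ℓ a m + (b : ℤ) * (ℓ : ℤ) ^ m)) := by
          rw [hy]
          have hre : (γ + n * y) - (γ + n * (digitSum ℓ a m + (b : ℤ) * (ℓ : ℤ) ^ m)) =
              (n : ℤ) * ((ℓ : ℤ) ^ m * (z - b)) := by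
            linear_combination (n : ℤ) * hz
          rw [hre, pow_succ]
          exact ((mul_dvd_mul (dvd_refl ((ℓ : ℤ) ^ m)) hbdvd)).mul_left (n : ℤ)
        obtain ⟨j, hj⟩ := reach_lemma ℓ n q γ τ hℓ hℓ2 hnℓ hqℓint hτ hdvd h2 f m hmf
          (γ + n * (digitSum ℓ a m + (b : ℤ) * (ℓ : ℤ) ^ m)) (δ * (q : ℤ) ^ i) (hδγ _)
          c hc hcl hdiffn hdiffl
        have e2 : cycCoset q (ℓ ^ f * n) (γ + n * (digitSum ℓ a m + (b : ℤ) * (ℓ : ℤ) ^ m)) =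
            cycCoset q (ℓ ^ f * n) (δ * (q : ℤ) ^ i) := (eqiff _ _).mpr ⟨τ * j, hj⟩
        rw [hM, ← e2]
    · intro h
      obtain ⟨δ₀, hcs, hd0⟩ : ∃ δ₀ : ℤ, cycCoset q (ℓ ^ f * n) δ = cycCoset q (ℓ ^ f * n) δ₀ ∧
          (n : ℤ) ∣ δ₀ - γ := by
        rcases h with ⟨m, hm, b, hb, hbne, hcs⟩ | hcs
        · exact ⟨_, hcs, hδγ _⟩
        · exact ⟨_, hcs, hδγ _⟩
      obtain ⟨j, hj⟩ := (eqiff _ _).mp hcs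
      apply (eqiffn δ γ).mpr
      refine ⟨j, ?_⟩
      have h1 := hdropn _ _ hj
      have h2 : γ ≡ δ₀ [ZMOD ((n : ℕ) : ℤ)] := by
        rw [Int.modEq_iff_dvd]
        exact hd0
      exact h2.trans h1
  · -- (2a) distinctness among (m,b)
    have keylt : ∀ m₁ b₁ m₂ b₂ : ℕ, m₁ < m₂ → m₂ < f → b₁ < ℓ → b₁ ≠ a m₁ → b₂ < ℓ →
        b₂ ≠ a m₂ →
        cycCoset q (ℓ ^ f * n) (γ + n * (digitSum ℓ a m₁ + (b₁ : ℤ) * (ℓ : ℤ) ^ m₁)) ≠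
          cycCoset q (ℓ ^ f * n) (γ + n * (digitSum ℓ a m₂ + (b₂ : ℤ) * (ℓ : ℤ) ^ m₂)) := by
      intro m₁ b₁ m₂ b₂ hlt hm₂ hb₁ hbne₁ hb₂ hbne₂ heq
      obtain ⟨c₁, hc₁, hcl₁⟩ := struct_lemma ℓ n hℓ hnℓ γ a ha hdig m₁ b₁ hb₁ hbne₁
      obtain ⟨c₂, hc₂, hcl₂⟩ := struct_lemma ℓ n hℓ hnℓ γ a ha hdig m₂ b₂ hb₂ hbne₂
      obtain ⟨j, hj⟩ := (eqiff _ _).mp heq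
      have hd : (ℓ : ℤ) ^ (m₁ + 1) ∣
          (γ + n * (digitSum ℓ a m₁ + (b₁ : ℤ) * (ℓ : ℤ) ^ m₁)) * (q : ℤ) ^ j -
          (γ + n * (digitSum ℓ a m₂ + (b₂ : ℤ) * (ℓ : ℤ) ^ m₂)) :=
        hdropℓ (m₁ + 1) (by omega) _ _ hj
      have hd2 : (ℓ : ℤ) ^ (m₁ + 1) ∣
          (γ + n * (digitSum ℓ a m₂ + (b₂ : ℤ) * (ℓ : ℤ) ^ m₂)) := by
        rw [hc₂]
        exact dvd_trans (pow_dvd_pow (ℓ : ℤ) (by omega : m₁ + 1 ≤ m₂)) (dvd_mul_right _ _)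
      have hd3 : (ℓ : ℤ) ^ (m₁ + 1) ∣
          (γ + n * (digitSum ℓ a m₁ + (b₁ : ℤ) * (ℓ : ℤ) ^ m₁)) * (q : ℤ) ^ j := by
        have := dvd_add hd hd2
        simpa using this
      rw [hc₁, mul_assoc, pow_succ] at hd3
      have hfin : (ℓ : ℤ) ∣ c₁ * (q : ℤ) ^ j :=
        (mul_dvd_mul_iff_left (pow_ne_zero m₁ hℓ0int)).mp hd3
      rcases hℓprimeint.dvd_mul.mp hfin with hcon | hcon
      · exact hcl₁ hcon
      · exact hqℓint (hℓprimeint.dvd_of_dvd_pow hcon)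
    intro m₁ hm₁ b₁ hb₁ hbne₁ m₂ hm₂ b₂ hb₂ hbne₂ hpair heq
    rcases Nat.lt_trichotomy m₁ m₂ with hlt | heqm | hgt
    · exact keylt m₁ b₁ m₂ b₂ hlt hm₂ hb₁ hbne₁ hb₂ hbne₂ heq
    · subst heqm
      have hbne : b₁ ≠ b₂ := by
        intro hbb
        apply hpair
        rw [hbb]
      obtain ⟨c₁, hc₁, hcl₁⟩ := struct_lemma ℓ n hℓ hnℓ γ a ha hdig m₁ b₁ hb₁ hbne₁
      obtain ⟨j, hj⟩ := (eqiff _ _).mp heq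
      have hdq := hτextract _ _ (hδγ _) (hδγ _) j hj
      have hd : (ℓ : ℤ) ^ (m₁ + 1) ∣
          (γ + n * (digitSum ℓ a m₁ + (b₁ : ℤ) * (ℓ : ℤ) ^ m₁)) * (q : ℤ) ^ j -
          (γ + n * (digitSum ℓ a m₁ + (b₂ : ℤ) * (ℓ : ℤ) ^ m₁)) :=
        hdropℓ (m₁ + 1) (by omega) _ _ hj
      have hd1 : (ℓ : ℤ) ^ (m₁ + 1) ∣
          (γ + n * (digitSum ℓ a m₁ + (b₁ : ℤ) * (ℓ : ℤ) ^ m₁)) * ((q : ℤ) ^ j - 1) := by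
        rw [hc₁, pow_succ, mul_assoc]
        exact mul_dvd_mul (dvd_refl _) (hdq.mul_left c₁)
      have hd2 : (ℓ : ℤ) ^ (m₁ + 1) ∣ ((n : ℤ) * ((b₁ : ℤ) - b₂)) * (ℓ : ℤ) ^ m₁ := by
        have hre : ((n : ℤ) * ((b₁ : ℤ) - b₂)) * (ℓ : ℤ) ^ m₁ =
            ((γ + n * (digitSum ℓ a m₁ + (b₁ : ℤ) * (ℓ : ℤ) ^ m₁)) * (q : ℤ) ^ j -
              (γ + n * (digitSum ℓ a m₁ + (b₂ : ℤ) * (ℓ : ℤ) ^ m₁))) -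
            (γ + n * (digitSum ℓ a m₁ + (b₁ : ℤ) * (ℓ : ℤ) ^ m₁)) * ((q : ℤ) ^ j - 1) := by
          ring
        rw [hre]
        exact dvd_sub hd hd1
      rw [mul_comm, pow_succ] at hd2
      have hfin : (ℓ : ℤ) ∣ (n : ℤ) * ((b₁ : ℤ) - b₂) :=
        (mul_dvd_mul_iff_left (pow_ne_zero m₁ hℓ0int)).mp hd2
      rcases hℓprimeint.dvd_mul.mp hfin with hcon | hcon
      · exact hnℓ (by exact_mod_cast hcon)
      · exact hbne (int_lt_prime_eq ℓ b₁ b₂ hb₁ hb₂ hcon)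
    · exact keylt m₂ b₂ m₁ b₁ hgt hm₁ hb₂ hbne₂ hb₁ hbne₁ heq.symm
  · -- (2b) distinctness from final coset
    intro m hmf b hb hbne heq
    obtain ⟨c₁, hc₁, hcl₁⟩ := struct_lemma ℓ n hℓ hnℓ γ a ha hdig m b hb hbne
    obtain ⟨j, hj⟩ := (eqiff _ _).mp heq
    have hd : (ℓ : ℤ) ^ (m + 1) ∣
        (γ + n * (digitSum ℓ a m + (b : ℤ) * (ℓ : ℤ) ^ m)) * (q : ℤ) ^ j -
        (γ + n * digitSum ℓ a (f + 1)) := hdropℓ (m + 1) (by omega) _ _ hj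
    have hd2 : (ℓ : ℤ) ^ (m + 1) ∣ (γ + n * digitSum ℓ a (f + 1)) :=
      (pow_dvd_pow (ℓ : ℤ) (by omega : m + 1 ≤ f + 1)).trans (hdig f)
    have hd3 : (ℓ : ℤ) ^ (m + 1) ∣
        (γ + n * (digitSum ℓ a m + (b : ℤ) * (ℓ : ℤ) ^ m)) * (q : ℤ) ^ j := by
      have := dvd_add hd hd2
      simpa using this
    rw [hc₁, mul_assoc, pow_succ] at hd3
    have hfin : (ℓ : ℤ) ∣ c₁ * (q : ℤ) ^ j :=
      (mul_dvd_mul_iff_left (pow_ne_zero m hℓ0int)).mp hd3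
    rcases hℓprimeint.dvd_mul.mp hfin with hcon | hcon
    · exact hcl₁ hcon
    · exact hqℓint (hℓprimeint.dvd_of_dvd_pow hcon)
  · -- (3a) sizes
    intro m hmf b hb hbne
    obtain ⟨c, hc, hcl⟩ := struct_lemma ℓ n hℓ hnℓ γ a ha hdig m b hb hbne
    have hiff := fun j => mem_iff_case_m ℓ n q γ τ hℓ hℓ2 hnℓ hτ hdvd h2 f m hmf c hcl _ hc
      (hδγ _) j
    constructor
    · exact (hiff _).mpr ⟨Nat.mul_pos (pow_pos hℓ.pos _) hτ0, dvd_rfl⟩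
    · intro j hj
      obtain ⟨hj0, hjd⟩ := (hiff j).mp hj
      exact Nat.le_of_dvd hj0 hjd
  · -- (3b) size of final coset
    have hiff := fun j => mem_iff_case_f ℓ n q γ τ hℓ hnℓ hτ f
      (γ + n * digitSum ℓ a (f + 1)) fact3 (hδγ _) j
    constructor
    · exact (hiff _).mpr ⟨hτ0, dvd_rfl⟩
    · intro j hj
      obtain ⟨hj0, hjd⟩ := (hiff j).mp hj
      exact Nat.le_of_dvd hj0 hjd
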